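/- arXiv:2507.02789 — 4 statements merged into one kernel-verified Lean document; each statement's English description precedes it below -/
import Mathlib

section
/- Let I ⊆ R = ℂ[x_1,…,x_n] be a homogeneous ideal with 𝔪^{k+2} ⊆ I ⊆ 𝔪^k for some k ≥ 1. Then restriction to the degree-k part gives a ℂ-linear bijection between the space of graded R-module homomorphisms φ: I → R/I of degree 1 (i.e. φ(I_j) ⊆ (R/I)_{j+1} for all j) and the space Hom_ℂ(I_k, (R/I)_{k+1}) of arbitrary ℂ-linear maps from I_k to (R/I)_{k+1}. In particular, dim_ℂ Hom_R(I, R/I)_1 = (dim_ℂ I_k)·(dim_ℂ (R/I)_{k+1}). -/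
open MvPolynomial

noncomputable section

/-- The polynomial ring `ℂ[x_1,…,x_n]`. -/
abbrev Rn (n : ℕ) : Type := MvPolynomial (Fin n) ℂ

/-- The irrelevant maximal ideal `𝔪 = (x_1,…,x_n)`. -/
def mIdeal (n : ℕ) : Ideal (Rn n) := Ideal.span (Set.range (X : Fin n → Rn n))

/-- The degree-`j` graded piece of an ideal, as a `ℂ`-subspace of `R`. -/
def gradedPiece (n : ℕ) (I : Ideal (Rn n)) (j : ℕ) : Submodule ℂ (Rn n) :=
  Submodule.restrictScalars ℂ I ⊓ homogeneousSubmodule (Fin n) ℂ j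

/-- The degree-`j` graded piece of the quotient `R/I`: the image of `R_j`. -/
def quotPiece (n : ℕ) (I : Ideal (Rn n)) (j : ℕ) : Submodule ℂ (Rn n ⧸ I) :=
  (homogeneousSubmodule (Fin n) ℂ j).map (Ideal.Quotient.mkₐ ℂ I).toLinearMap

/-- A graded `R`-module homomorphism `I → R/I` of degree `1`. -/
def IsDegOne (n : ℕ) (I : Ideal (Rn n)) (φ : ↥I →ₗ[Rn n] Rn n ⧸ I) : Prop :=
  ∀ (j : ℕ) (f : ↥I), (f : Rn n) ∈ homogeneousSubmodule (Fin n) ℂ j →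
    φ f ∈ quotPiece n I (j + 1)

/-- `Hom_R(I, R/I)_1`, the `ℂ`-vector space of degree-one graded homomorphisms. -/
def degOneHom (n : ℕ) (I : Ideal (Rn n)) : Submodule ℂ (↥I →ₗ[Rn n] Rn n ⧸ I) where
  carrier := {φ | IsDegOne n I φ}
  add_mem' := by
    intro φ ψ hφ hψ j f hf
    simpa using add_mem (hφ j f hf) (hψ j f hf)
  zero_mem' := by
    intro j f hf
    simpa using (quotPiece _ I (j + 1)).zero_mem
  smul_mem' := by
    intro c φ hφ j f hf
    simpa using Submodule.smul_mem _ c (hφ j f hf)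

namespace Stmt4Aux

variable {n : ℕ}

lemma degree_add (u v : Fin n →₀ ℕ) :
    (u + v).degree = u.degree + v.degree := by
  simp only [Finsupp.degree_eq_weight_one, map_add]

lemma X_mem_mIdeal (i : Fin n) : (X i : Rn n) ∈ mIdeal n :=
  Ideal.subset_span ⟨i, rfl⟩

lemma constantCoeff_of_mem {p : Rn n} (hp : p ∈ mIdeal n) : constantCoeff p = 0 := by
  have h : mIdeal n ≤ RingHom.ker (constantCoeff (σ := Fin n) (R := ℂ)) := by
    rw [mIdeal, Ideal.span_le]
    rintro x ⟨i, rfl⟩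
    simp [RingHom.mem_ker]
  simpa [RingHom.mem_ker] using h hp

lemma prod_pow_mem (s : Finset (Fin n)) (e : Fin n → ℕ) :
    (∏ i ∈ s, (X i : Rn n) ^ e i) ∈ mIdeal n ^ (∑ i ∈ s, e i) := by
  classical
  refine Finset.induction_on s (by simp [Ideal.one_eq_top]) ?_
  intro a t ha ih
  rw [Finset.prod_insert ha, Finset.sum_insert ha, pow_add]
  exact Ideal.mul_mem_mul (Ideal.pow_mem_pow (X_mem_mIdeal a) _) ih

lemma mem_pow_of_support {p : Rn n} {m : ℕ} (h : ∀ d ∈ p.support, m ≤ d.degree) :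
    p ∈ mIdeal n ^ m := by
  classical
  rw [p.as_sum]
  refine Submodule.sum_mem _ ?_
  intro d hd
  rw [monomial_eq]
  refine Ideal.mul_mem_left _ _ (Ideal.pow_le_pow_right (h d hd) ?_)
  exact prod_pow_mem d.support d

lemma coeff_eq_zero_of_mem_pow {m : ℕ} :
    ∀ {p : Rn n}, p ∈ mIdeal n ^ m → ∀ d : Fin n →₀ ℕ, d.degree < m → coeff d p = 0 := by
  classical
  induction m with
  | zero => intro p _ d hd; omega
  | succ m ih =>
    intro p hp d hd
    rw [pow_succ] at hp
    revert d hd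
    refine Submodule.mul_induction_on hp ?_ ?_
    · intro a ha b hb e he
      rw [coeff_mul]
      refine Finset.sum_eq_zero ?_
      rintro ⟨u, v⟩ hx
      rw [Finset.HasAntidiagonal.mem_antidiagonal] at hx
      dsimp only at hx ⊢
      by_cases hu : u.degree < m
      · rw [ih ha u hu, zero_mul]
      · have hdeg : u.degree + v.degree = e.degree := by rw [← degree_add, hx]
        have hv : v = 0 := by rw [← Finsupp.degree_eq_zero_iff]; omega
        subst hv
        have hb0 : coeff (0 : Fin n →₀ ℕ) b = 0 := constantCoeff_of_mem hb
        rw [hb0, mul_zero]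
    · intro x y hx hy e he
      rw [coeff_add, hx e he, hy e he, add_zero]

lemma hc_low_zero {p : Rn n} {k j : ℕ}
    (h : ∀ d : Fin n →₀ ℕ, d.degree < k → coeff d p = 0) (hj : j < k) :
    homogeneousComponent j p = 0 := by
  refine MvPolynomial.ext _ _ fun e => ?_
  rw [coeff_homogeneousComponent, coeff_zero]
  split
  · next heq => exact h e (by omega)
  · rfl

lemma hc_mul {p : Rn n} (r : Rn n) {k : ℕ}
    (h : ∀ d : Fin n →₀ ℕ, d.degree < k → coeff d p = 0) :
    homogeneousComponent k (r * p) = C (constantCoeff r) * homogeneousComponent k p := by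
  classical
  refine MvPolynomial.ext _ _ fun e => ?_
  rw [coeff_homogeneousComponent, coeff_C_mul, coeff_homogeneousComponent]
  split
  · next heq =>
    rw [coeff_mul]
    refine Finset.sum_eq_single (0, e) ?_ ?_
    · rintro ⟨u, v⟩ hx hne
      rw [Finset.HasAntidiagonal.mem_antidiagonal] at hx
      dsimp only at hx ⊢
      by_cases hv : v.degree < k
      · rw [h v hv, mul_zero]
      · have hdeg : u.degree + v.degree = e.degree := by rw [← degree_add, hx]
        have hu : u = 0 := by rw [← Finsupp.degree_eq_zero_iff]; omega
        subst hu
        rw [zero_add] at hx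
        subst hx
        exact absurd rfl hne
    · intro hmem
      exact absurd (Finset.HasAntidiagonal.mem_antidiagonal.mpr (zero_add e)) hmem
  · rw [mul_zero]

lemma mul_mem_pow_of_homog {k : ℕ} {a g : Rn n} (ha : constantCoeff a = 0)
    (hg : g ∈ homogeneousSubmodule (Fin n) ℂ (k + 1)) :
    a * g ∈ mIdeal n ^ (k + 2) := by
  classical
  refine mem_pow_of_support ?_
  intro d hd
  rw [MvPolynomial.mem_support_iff] at hd
  by_contra hcon
  push_neg at hcon
  apply hd
  rw [coeff_mul]
  refine Finset.sum_eq_zero ?_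
  rintro ⟨u, v⟩ hx
  rw [Finset.HasAntidiagonal.mem_antidiagonal] at hx
  by_cases hv : coeff v g = 0
  · rw [hv, mul_zero]
  · have hdv : v.degree = k + 1 := by
      rw [Finsupp.degree_eq_weight_one]
      exact (mem_homogeneousSubmodule _ _).mp hg hv
    have hdeg : u.degree + v.degree = d.degree := by rw [← degree_add, hx]
    have hu : u = 0 := by rw [← Finsupp.degree_eq_zero_iff]; omega
    subst hu
    rw [show coeff 0 a = constantCoeff a from rfl, ha, zero_mul]

lemma quot_trivial {k : ℕ} {I : Ideal (Rn n)} (h1 : mIdeal n ^ (k + 2) ≤ I)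
    {j : ℕ} (hj : k + 2 ≤ j) : quotPiece n I j = ⊥ := by
  refine le_bot_iff.mp ?_
  rintro y ⟨g, hg, rfl⟩
  have hmem : g ∈ mIdeal n ^ (k + 2) := by
    refine mem_pow_of_support ?_
    intro d hd
    rw [MvPolynomial.mem_support_iff] at hd
    have hdeg : d.degree = j := by
      rw [Finsupp.degree_eq_weight_one]
      exact (mem_homogeneousSubmodule _ _).mp hg hd
    omega
  have : g ∈ I := h1 hmem
  simp only [Submodule.mem_bot, AlgHom.toLinearMap_apply, Ideal.Quotient.mkₐ_eq_mk]
  exact (Ideal.Quotient.eq_zero_iff_mem).mpr this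

end Stmt4Aux

open Stmt4Aux in
set_option maxHeartbeats 2000000 in
set_option synthInstance.maxHeartbeats 400000 in
/-- Restriction to the degree-`k` part gives a bijection between degree-one graded
`R`-module homomorphisms `I → R/I` and arbitrary `ℂ`-linear maps `I_k → (R/I)_{k+1}`;
in particular `dim Hom_R(I,R/I)_1 = dim I_k · dim (R/I)_{k+1}`. -/
theorem stmt4 (n k : ℕ) (hk : 1 ≤ k) (I : Ideal (Rn n))
    (hhom : ∀ f ∈ I, ∀ j : ℕ, homogeneousComponent j f ∈ I)
    (h1 : mIdeal n ^ (k + 2) ≤ I) (h2 : I ≤ mIdeal n ^ k) :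
    (∀ ψ : ↥(gradedPiece n I k) →ₗ[ℂ] Rn n ⧸ I,
        (∀ v, ψ v ∈ quotPiece n I (k + 1)) →
        ∃! φ : ↥I →ₗ[Rn n] Rn n ⧸ I, IsDegOne n I φ ∧
          ∀ v : ↥(gradedPiece n I k),
            φ ⟨(v : Rn n), (Submodule.mem_inf.mp v.2).1⟩ = ψ v) ∧
    Module.finrank ℂ ↥(degOneHom n I) =
      Module.finrank ℂ ↥(gradedPiece n I k) *
        Module.finrank ℂ ↥(quotPiece n I (k + 1)) := by
  classical
  have hJ : ∀ f ∈ I, ∀ d : Fin n →₀ ℕ, d.degree < k → coeff d f = 0 :=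
    fun f hf d hd => coeff_eq_zero_of_mem_pow (h2 hf) d hd
  have hckmem : ∀ f : ↥I, homogeneousComponent k (f : Rn n) ∈ gradedPiece n I k :=
    fun f => Submodule.mem_inf.mpr ⟨hhom f f.2 k, homogeneousComponent_mem k _⟩
  -- scalar action on elements of the (k+1)-st quotient piece factors through the constant term
  have hsmul : ∀ (r : Rn n) (y : Rn n ⧸ I), y ∈ quotPiece n I (k + 1) →
      r • y = (constantCoeff r) • y := by
    rintro r y ⟨g, hg, rfl⟩
    have hmem : (r - C (constantCoeff r)) * g ∈ I := by
      refine h1 (mul_mem_pow_of_homog ?_ hg)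
      simp
    simp only [AlgHom.toLinearMap_apply, Ideal.Quotient.mkₐ_eq_mk]
    have e1 : r • (Ideal.Quotient.mk I g) = Ideal.Quotient.mk I (r * g) := rfl
    have e2 : (constantCoeff r) • (Ideal.Quotient.mk I g) =
        Ideal.Quotient.mk I (C (constantCoeff r) * g) := by
      rw [← smul_eq_C_mul]
      rfl
    rw [e1, e2, Ideal.Quotient.mk_eq_mk_iff_sub_mem]
    rw [← sub_mul]
    exact hmem
  -- the extension construction
  have mkPhi : ∀ (ψ : ↥(gradedPiece n I k) →ₗ[ℂ] Rn n ⧸ I),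
      (∀ v, ψ v ∈ quotPiece n I (k + 1)) →
      { φ : ↥I →ₗ[Rn n] Rn n ⧸ I //
        ∀ f : ↥I, φ f = ψ ⟨homogeneousComponent k (f : Rn n), hckmem f⟩ } := by
    intro ψ hψ
    refine ⟨{ toFun := fun f => ψ ⟨homogeneousComponent k (f : Rn n), hckmem f⟩,
              map_add' := ?_, map_smul' := ?_ }, fun f => rfl⟩
    · intro f g
      rw [← map_add]
      refine congrArg ψ (Subtype.ext ?_)
      show homogeneousComponent k ((f + g : ↥I) : Rn n) =
        homogeneousComponent k (f : Rn n) + homogeneousComponent k (g : Rn n)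
      rw [show ((f + g : ↥I) : Rn n) = (f : Rn n) + (g : Rn n) from rfl, map_add]
    · intro r f
      have h0 : ((r • f : ↥I) : Rn n) = r * (f : Rn n) := rfl
      have hc2 : (⟨homogeneousComponent k ((r • f : ↥I) : Rn n), hckmem _⟩ :
          ↥(gradedPiece n I k)) =
          constantCoeff r • ⟨homogeneousComponent k (f : Rn n), hckmem f⟩ := by
        refine Subtype.ext ?_
        show homogeneousComponent k ((r • f : ↥I) : Rn n) =
          constantCoeff r • homogeneousComponent k (f : Rn n)
        rw [h0, hc_mul r (hJ f f.2), smul_eq_C_mul]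
      simp only [RingHom.id_apply]
      rw [hc2, map_smul]
      exact (hsmul r (ψ _) (hψ _)).symm
  -- a degree-one homomorphism is determined by its degree-k restriction
  have hkey : ∀ φ : ↥I →ₗ[Rn n] Rn n ⧸ I, IsDegOne n I φ → ∀ f : ↥I,
      φ f = φ ⟨homogeneousComponent k (f : Rn n), hhom f f.2 k⟩ := by
    intro φ hφ f
    set F : ℕ → ↥I := fun j => ⟨homogeneousComponent j (f : Rn n), hhom f f.2 j⟩
      with hF
    have hsum : (f : ↥I) = ∑ j ∈ Finset.range ((f : Rn n).totalDegree + 1), F j := by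
      apply Subtype.ext
      rw [Submodule.coe_sum]
      exact (sum_homogeneousComponent _).symm
    conv_lhs => rw [hsum]
    rw [map_sum]
    refine Finset.sum_eq_single k ?_ ?_
    · intro j hj hjk
      rcases lt_or_gt_of_ne hjk with hlt | hgt
      · have hz : F j = 0 :=
          Subtype.ext (show homogeneousComponent j (f : Rn n) = ((0 : ↥I) : Rn n) by
            rw [hc_low_zero (hJ f f.2) hlt]; rfl)
        rw [hz, map_zero]
      · have hmem := hφ j (F j) (homogeneousComponent_mem j _)
        rw [quot_trivial h1 (by omega : k + 2 ≤ j + 1)] at hmem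
        exact (Submodule.mem_bot ℂ).mp hmem
    · intro hk'
      have hz : homogeneousComponent k (f : Rn n) = 0 :=
        homogeneousComponent_eq_zero _ _ (by
          simp only [Finset.mem_range, not_lt] at hk'; omega)
      rw [show F k = 0 from
        Subtype.ext (show homogeneousComponent k (f : Rn n) = ((0 : ↥I) : Rn n) by
          rw [hz]; rfl), map_zero]
  -- the constructed extension is degree one
  have hdeg1 : ∀ ψ hψ, IsDegOne n I ((mkPhi ψ hψ) : ↥I →ₗ[Rn n] Rn n ⧸ I) := by
    intro ψ hψ j f hf
    rw [(mkPhi ψ hψ).2 f]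
    rcases eq_or_ne j k with rfl | hne
    · exact hψ _
    · have hz : homogeneousComponent k (f : Rn n) = 0 := by
        rw [homogeneousComponent_of_mem hf, if_neg (Ne.symm hne)]
      rw [show (⟨homogeneousComponent k (f : Rn n), hckmem f⟩ :
        ↥(gradedPiece n I k)) = 0 from Subtype.ext
          (show homogeneousComponent k (f : Rn n) = ((0 : ↥(gradedPiece n I k)) : Rn n) by
            rw [hz]; rfl), map_zero]
      exact Submodule.zero_mem _
  -- restriction of the extension
  have hrest : ∀ ψ hψ (v : ↥(gradedPiece n I k)),
      ((mkPhi ψ hψ) : ↥I →ₗ[Rn n] Rn n ⧸ I) ⟨(v : Rn n), (Submodule.mem_inf.mp v.2).1⟩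
        = ψ v := by
    intro ψ hψ v
    rw [(mkPhi ψ hψ).2]
    refine congrArg ψ (Subtype.ext ?_)
    have hv := homogeneousComponent_of_mem (m := k) (Submodule.mem_inf.mp v.2).2
    simpa using hv
  constructor
  · -- existence and uniqueness
    intro ψ hψ
    refine ⟨(mkPhi ψ hψ : ↥I →ₗ[Rn n] Rn n ⧸ I), ⟨hdeg1 ψ hψ, hrest ψ hψ⟩, ?_⟩
    rintro φ ⟨hφ1, hφ2⟩
    refine LinearMap.ext fun f => ?_
    rw [hkey φ hφ1 f, hkey _ (hdeg1 ψ hψ) f]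
    exact (hφ2 ⟨_, hckmem f⟩).trans (hrest ψ hψ ⟨_, hckmem f⟩).symm
  · -- dimension count via a linear equivalence
    have hfd1 : FiniteDimensional ℂ (homogeneousSubmodule (Fin n) ℂ k) := by
      refine Submodule.finiteDimensional_of_le (S₂ := restrictTotalDegree (Fin n) ℂ k) ?_
      intro p hp
      exact (mem_restrictTotalDegree _ _ _).mpr
        ((mem_homogeneousSubmodule _ _).mp hp).totalDegree_le
    have hfdH : FiniteDimensional ℂ (gradedPiece n I k) :=
      Submodule.finiteDimensional_of_le inf_le_right
    have hfd2 : FiniteDimensional ℂ (homogeneousSubmodule (Fin n) ℂ (k + 1)) := by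
      refine Submodule.finiteDimensional_of_le (S₂ := restrictTotalDegree (Fin n) ℂ (k + 1)) ?_
      intro p hp
      exact (mem_restrictTotalDegree _ _ _).mpr
        ((mem_homogeneousSubmodule _ _).mp hp).totalDegree_le
    have hfdQ : FiniteDimensional ℂ (quotPiece n I (k + 1)) := by
      rw [quotPiece]
      exact Module.Finite.map _ _
    -- the restriction map as a linear map into the (k+1)-st quotient piece
    have restr : ∀ φ : ↥(degOneHom n I),
        { ρ : ↥(gradedPiece n I k) →ₗ[ℂ] ↥(quotPiece n I (k + 1)) //
          ∀ v, (ρ v : Rn n ⧸ I) =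
            (φ : ↥I →ₗ[Rn n] Rn n ⧸ I) ⟨(v : Rn n), (Submodule.mem_inf.mp v.2).1⟩ } := by
      intro φ
      have hmem : ∀ v : ↥(gradedPiece n I k),
          (φ : ↥I →ₗ[Rn n] Rn n ⧸ I) ⟨(v : Rn n), (Submodule.mem_inf.mp v.2).1⟩
            ∈ quotPiece n I (k + 1) :=
        fun v => φ.2 k _ (Submodule.mem_inf.mp v.2).2
      refine ⟨{ toFun := fun v => ⟨_, hmem v⟩, map_add' := ?_, map_smul' := ?_ },
        fun v => rfl⟩
      · intro v w
        refine Subtype.ext ?_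
        show (φ : ↥I →ₗ[Rn n] Rn n ⧸ I) _ = (φ : ↥I →ₗ[Rn n] Rn n ⧸ I) _ + _
        rw [← map_add]
        exact congrArg _ (Subtype.ext rfl)
      · intro c v
        refine Subtype.ext ?_
        show (φ : ↥I →ₗ[Rn n] Rn n ⧸ I) _ = c • (φ : ↥I →ₗ[Rn n] Rn n ⧸ I) _
        have hx : (⟨((c • v : ↥(gradedPiece n I k)) : Rn n),
            (Submodule.mem_inf.mp (c • v).2).1⟩ : ↥I) =
            (C c : Rn n) • ⟨(v : Rn n), (Submodule.mem_inf.mp v.2).1⟩ := by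
          refine Subtype.ext ?_
          show (c • (v : Rn n)) = (C c : Rn n) * (v : Rn n)
          rw [smul_eq_C_mul]
        rw [hx, map_smul]
        rw [show (C c : Rn n) = algebraMap ℂ (Rn n) c from rfl, algebraMap_smul]
    -- build the equivalence
    let e : ↥(degOneHom n I) ≃ₗ[ℂ]
        (↥(gradedPiece n I k) →ₗ[ℂ] ↥(quotPiece n I (k + 1))) :=
      { toFun := fun φ => (restr φ).1
        map_add' := by
          intro φ φ'
          refine LinearMap.ext fun v => Subtype.ext ?_
          rw [((restr (φ + φ')).2 v)]
          show _ = ((restr φ).1 v : Rn n ⧸ I) + ((restr φ').1 v : Rn n ⧸ I)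
          rw [(restr φ).2 v, (restr φ').2 v]
          rfl
        map_smul' := by
          intro c φ
          refine LinearMap.ext fun v => Subtype.ext ?_
          rw [((restr (c • φ)).2 v)]
          show _ = c • ((restr φ).1 v : Rn n ⧸ I)
          rw [(restr φ).2 v]
          rfl
        invFun := fun ψ =>
          ⟨(mkPhi ((quotPiece n I (k + 1)).subtype ∘ₗ ψ) (fun v => (ψ v).2) :
              ↥I →ₗ[Rn n] Rn n ⧸ I),
            hdeg1 _ _⟩
        left_inv := by
          intro φ
          refine Subtype.ext (LinearMap.ext fun f => ?_)
          show (mkPhi _ _ : ↥I →ₗ[Rn n] Rn n ⧸ I) f = (φ : ↥I →ₗ[Rn n] Rn n ⧸ I) f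
          refine (hkey _ (hdeg1 _ _) f).trans ?_
          rw [hkey _ φ.2 f]
          refine ((hrest _ _ ⟨_, hckmem f⟩).trans ?_)
          show ((restr φ).1 ⟨_, hckmem f⟩ : Rn n ⧸ I) = _
          rw [(restr φ).2 ⟨_, hckmem f⟩]
        right_inv := by
          intro ψ
          refine LinearMap.ext fun v => Subtype.ext ?_
          rw [(restr _).2 v]
          show (mkPhi _ _ : ↥I →ₗ[Rn n] Rn n ⧸ I) _ = (ψ v : Rn n ⧸ I)
          refine (hrest _ _ v).trans ?_
          rfl }
    rw [e.finrank_eq, Module.finrank_linearMap]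

end
end

section
/- Fix an integer k ≥ 1 and define Θ: ℝ² → ℝ by Θ(a,b) = a·C(k+1,2) + (b − 3a)·(C(k+2,2) − a) + (C(k+4,2) − 3b + 3a)·(C(k+3,2) − b) − 3. Then for all (a,b) ∈ ℝ², Θ(a,b) ≥ (k⁴ + 8k³ + 21k² + 20k − 120)/40. In particular, Θ(a,b) > 0 for all (a,b) ∈ ℝ² whenever k ≥ 2. -/
/-- The function `Θ_{3,k,0}` of the paper (three variables, second-syzygy parameter `0`):
`Θ(a,b) = a·C(k+1,2) + (b − 3a)(C(k+2,2) − a) + (C(k+4,2) − 3b + 3a)(C(k+3,2) − b) − 3`. -/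
noncomputable def Theta3 (k : ℕ) (a b : ℝ) : ℝ :=
  a * (Nat.choose (k + 1) 2 : ℝ) + (b - 3 * a) * ((Nat.choose (k + 2) 2 : ℝ) - a) +
    ((Nat.choose (k + 4) 2 : ℝ) - 3 * b + 3 * a) * ((Nat.choose (k + 3) 2 : ℝ) - b) - 3

/-- `Θ_{3,k,0}(a,b) ≥ (k⁴ + 8k³ + 21k² + 20k − 120)/40` for all `(a,b) ∈ ℝ²`;
in particular `Θ_{3,k,0} > 0` everywhere when `k ≥ 2`. -/
theorem stmt11 (k : ℕ) (hk : 1 ≤ k) :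
    (∀ a b : ℝ, ((k : ℝ) ^ 4 + 8 * (k : ℝ) ^ 3 + 21 * (k : ℝ) ^ 2 + 20 * (k : ℝ) - 120) / 40 ≤
      Theta3 k a b) ∧
    (2 ≤ k → ∀ a b : ℝ, 0 < Theta3 k a b) := by
  have key : ∀ m : ℕ, ((Nat.choose (k + m) 2 : ℕ) : ℝ)
      = ((k : ℝ) + m) * ((k : ℝ) + m - 1) / 2 := by
    intro m
    rw [Nat.cast_choose_two]
    push_cast
    ring
  have hmin : ∀ a b : ℝ,
      ((k : ℝ) ^ 4 + 8 * (k : ℝ) ^ 3 + 21 * (k : ℝ) ^ 2 + 20 * (k : ℝ) - 120) / 40 ≤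
        Theta3 k a b := by
    intro a b
    have hId : Theta3 k a b -
        ((k : ℝ) ^ 4 + 8 * (k : ℝ) ^ 3 + 21 * (k : ℝ) ^ 2 + 20 * (k : ℝ) - 120) / 40 =
        5 / 2 * (a - b + (2 * (k : ℝ) ^ 2 + 13 * (k : ℝ) + 20) / 10) ^ 2 +
        1 / 2 * (a + b - ((k : ℝ) ^ 2 + 6 * (k : ℝ) + 8) / 2) ^ 2 := by
      unfold Theta3
      rw [key 1, key 2, key 3, key 4]
      push_cast
      ring
    nlinarith [sq_nonneg (a - b + (2 * (k : ℝ) ^ 2 + 13 * (k : ℝ) + 20) / 10),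
      sq_nonneg (a + b - ((k : ℝ) ^ 2 + 6 * (k : ℝ) + 8) / 2)]
  refine ⟨hmin, fun hk2 a b => ?_⟩
  have hk2' : (2 : ℝ) ≤ (k : ℝ) := by exact_mod_cast hk2
  have := hmin a b
  nlinarith [pow_le_pow_left₀ (by norm_num : (0:ℝ) ≤ 2) hk2' 4,
    pow_le_pow_left₀ (by norm_num : (0:ℝ) ≤ 2) hk2' 3,
    pow_le_pow_left₀ (by norm_num : (0:ℝ) ≤ 2) hk2' 2]
end

section
/- Let I ⊆ R = ℂ[x_1,…,x_n] be a homogeneous ideal with 𝔪^{k+2} ⊆ I ⊆ 𝔪^k for some k ≥ 1. Let g_1, …, g_h be a ℂ-basis of I_k, let f_1, …, f_h ∈ R_{k+1} be arbitrary homogeneous polynomials of degree k+1, and let t ∈ ℂ. Define the ideal J = (g_1 + t·f_1, …, g_h + t·f_h) + I', where I' is the ideal generated by I_{k+1} together with 𝔪^{k+2}. Then the ideal of initial forms of J equals I, i.e. In(J) = I; in particular dim_ℂ(R/J) = dim_ℂ(R/I). -/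
open MvPolynomial

noncomputable section

/-- The ideal of initial forms `In(J)` of an ideal `J`: it is generated by the lowest-degree
nonzero homogeneous components of the elements of `J`. -/
def initialIdeal (n : ℕ) (J : Ideal (Rn n)) : Ideal (Rn n) :=
  Ideal.span {g | ∃ f ∈ J, ∃ m : ℕ, g = homogeneousComponent m f ∧ g ≠ 0 ∧
    ∀ m' < m, homogeneousComponent m' f = 0}


set_option maxHeartbeats 1000000

section Helpers

variable {n : ℕ}

lemma degree_add' (d e : Fin n →₀ ℕ) : (d + e).degree = d.degree + e.degree := by
  simp [Finsupp.degree_eq_weight_one]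

lemma exists_le_degree (d : Fin n →₀ ℕ) (m : ℕ) (hm : m ≤ d.degree) :
    ∃ e : Fin n →₀ ℕ, e ≤ d ∧ e.degree = m := by
  induction m with
  | zero => exact ⟨0, zero_le, map_zero _⟩
  | succ m ih =>
    obtain ⟨e, he, hed⟩ := ih (le_trans (Nat.le_succ m) hm)
    have hne : e ≠ d := by rintro rfl; omega
    have : ∃ i, e i < d i := by
      by_contra hc
      push_neg at hc
      exact hne (le_antisymm he hc)
    obtain ⟨i, hi⟩ := this
    refine ⟨e + Finsupp.single i 1, ?_, ?_⟩
    · intro j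
      simp only [Finsupp.add_apply, Finsupp.single_apply]
      rcases eq_or_ne i j with rfl | hij
      · simpa using hi
      · simp [hij]; exact he j
    · rw [degree_add', hed]
      simp [Finsupp.degree_single, Finsupp.support_single_ne_zero]

lemma monomial_one_mem (e : Fin n →₀ ℕ) : (monomial e (1:ℂ) : Rn n) ∈ mIdeal n ^ e.degree := by
  have : (monomial e (1:ℂ) : Rn n) = ∏ i ∈ e.support, X i ^ e i := by
    rw [← prod_X_pow_eq_monomial]
  rw [this, Finsupp.degree_apply]
  classical
  induction e.support using Finset.induction with
  | empty => simp
  | insert _ _ hx ih =>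
    rw [Finset.prod_insert hx, Finset.sum_insert hx, pow_add]
    exact Ideal.mul_mem_mul (Ideal.pow_mem_pow (Ideal.subset_span (Set.mem_range_self _)) _) ih

lemma mem_mpow {m : ℕ} {p : Rn n} :
    p ∈ mIdeal n ^ m ↔ ∀ d ∈ p.support, m ≤ d.degree := by
  constructor
  · intro hp
    induction m generalizing p with
    | zero => intro d _; exact Nat.zero_le _
    | succ m ih =>
      rw [pow_succ] at hp
      refine Submodule.mul_induction_on hp ?_ ?_
      · intro a ha b hb d hd
        classical
        have := MvPolynomial.support_mul a b hd
        rw [Finset.mem_add] at this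
        obtain ⟨da, hda, db, hdb, rfl⟩ := this
        have h1 : m ≤ da.degree := ih ha da hda
        have h2 : 1 ≤ db.degree := by
          have hb' := mem_ideal_span_X_image (s := (Set.univ : Set (Fin n))) |>.mp
            (by rwa [Set.image_univ]) db hdb
          obtain ⟨i, _, hi⟩ := hb'
          have := Finsupp.le_degree i db
          omega
        rw [degree_add']; omega
      · intro x y hx hy d hd
        have := Finsupp.support_add hd
        rw [Finset.mem_union] at this
        rcases this with h | h
        · exact hx d h
        · exact hy d h
  · intro hp
    rw [MvPolynomial.as_sum p]
    refine Ideal.sum_mem _ fun d hd => ?_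
    obtain ⟨e, he, hed⟩ := exists_le_degree d m (hp d hd)
    have : (monomial d (coeff d p) : Rn n) = monomial e 1 * monomial (d - e) (coeff d p) := by
      rw [monomial_mul, one_mul, add_tsub_cancel_of_le he]
    rw [this, ← hed]
    exact Ideal.mul_mem_right _ _ (monomial_one_mem e)

lemma hc_zero_of_mem {m j : ℕ} {p : Rn n} (hp : p ∈ mIdeal n ^ m) (hj : j < m) :
    homogeneousComponent j p = 0 := by
  apply homogeneousComponent_eq_zero'
  intro d hd
  have := mem_mpow.mp hp d hd
  omega

lemma homSub_mem_mpow {m j : ℕ} {p : Rn n} (hp : p ∈ homogeneousSubmodule (Fin n) ℂ j)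
    (hj : m ≤ j) : p ∈ mIdeal n ^ m := by
  rw [mem_mpow]
  intro d hd
  rw [mem_homogeneousSubmodule] at hp
  have := hp (mem_support_iff.mp hd)
  rw [Finsupp.degree_eq_weight_one]
  exact hj.trans this.symm.le

lemma mem_mpow_of_comps {m : ℕ} {p : Rn n} (h : ∀ j < m, homogeneousComponent j p = 0) :
    p ∈ mIdeal n ^ m := by
  rw [mem_mpow]
  intro d hd
  by_contra hc
  push_neg at hc
  have h0 := h d.degree hc
  have h1 : coeff d (homogeneousComponent d.degree p) = coeff d p := by
    rw [coeff_homogeneousComponent]; simp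
  rw [h0] at h1
  simp only [coeff_zero] at h1
  exact mem_support_iff.mp hd h1.symm

lemma mul_mem_mpow {a b : Rn n} {p q : ℕ} (ha : a ∈ mIdeal n ^ p) (hb : b ∈ mIdeal n ^ q) :
    a * b ∈ mIdeal n ^ (p + q) := by
  rw [pow_add]; exact Ideal.mul_mem_mul ha hb

lemma sub_C_mem (r : Rn n) : r - C (coeff 0 r) ∈ mIdeal n ^ 1 := by
  apply mem_mpow_of_comps
  intro j hj
  interval_cases j
  simp

lemma sub_C_sub_comp1_mem (r : Rn n) :
    r - C (coeff 0 r) - homogeneousComponent 1 r ∈ mIdeal n ^ 2 := by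
  apply mem_mpow_of_comps
  intro j hj
  have hC : (C (coeff 0 r) : Rn n) ∈ homogeneousSubmodule (Fin n) ℂ 0 := by
    rw [mem_homogeneousSubmodule]; exact isHomogeneous_C _ _
  interval_cases j
  · rw [map_sub, map_sub, homogeneousComponent_of_mem (homogeneousComponent_mem 1 r)]
    simp
  · rw [map_sub, map_sub, homogeneousComponent_of_mem hC,
      homogeneousComponent_of_mem (homogeneousComponent_mem 1 r)]
    simp

lemma init_mem {K : Ideal (Rn n)} {x : Rn n} {j : ℕ} (hxK : x ∈ K)
    (hx : x ∈ homogeneousSubmodule (Fin n) ℂ j) : x ∈ initialIdeal n K := by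
  by_cases h0 : x = 0
  · simp [h0]
  · apply Ideal.subset_span
    refine ⟨x, hxK, j, ?_, h0, ?_⟩
    · rw [homogeneousComponent_of_mem hx, if_pos rfl]
    · intro m' hm'
      rw [homogeneousComponent_of_mem hx, if_neg (by omega)]

lemma sub_trunc_mem (m : ℕ) (p : Rn n) :
    p - ∑ j ∈ Finset.range m, homogeneousComponent j p ∈ mIdeal n ^ m := by
  apply mem_mpow_of_comps
  intro j hj
  rw [map_sub, map_sum]
  rw [Finset.sum_eq_single j]
  · rw [homogeneousComponent_of_mem (homogeneousComponent_mem j p), if_pos rfl, sub_self]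
  · intro b _ hb
    rw [homogeneousComponent_of_mem (homogeneousComponent_mem b p), if_neg (Ne.symm hb)]
  · intro hjm
    exact absurd (Finset.mem_range.mpr hj) hjm

lemma findimV (m : ℕ) : FiniteDimensional ℂ (Rn n ⧸ mIdeal n ^ m) := by
  apply Module.Finite.of_surjective
    ((Ideal.Quotient.mkₐ ℂ (mIdeal n ^ m)).toLinearMap.comp
      (Submodule.subtype (restrictTotalDegree (Fin n) ℂ m)))
  intro x
  obtain ⟨p, rfl⟩ := Ideal.Quotient.mk_surjective x
  refine ⟨⟨∑ j ∈ Finset.range m, homogeneousComponent j p, ?_⟩, ?_⟩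
  · rw [mem_restrictTotalDegree]
    refine le_trans (totalDegree_finset_sum _ _) ?_
    apply Finset.sup_le
    intro j hj
    exact le_trans (homogeneousComponent_isHomogeneous j p).totalDegree_le
      (le_of_lt (Finset.mem_range.mp hj))
  · show Ideal.Quotient.mk (mIdeal n ^ m) (∑ j ∈ Finset.range m, homogeneousComponent j p)
        = Ideal.Quotient.mk (mIdeal n ^ m) p
    rw [Ideal.Quotient.mk_eq_mk_iff_sub_mem]
    have := sub_trunc_mem m p
    simpa using neg_mem this

lemma finrank_quot (m : ℕ) (K : Ideal (Rn n)) (hle : mIdeal n ^ m ≤ K) :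
    Module.finrank ℂ (Rn n ⧸ K) =
      Module.finrank ℂ (Rn n ⧸ mIdeal n ^ m) -
      Module.finrank ℂ ((Submodule.restrictScalars ℂ K).map
        (Ideal.Quotient.mkₐ ℂ (mIdeal n ^ m)).toLinearMap) := by
  haveI := findimV (n := n) m
  set m2 := mIdeal n ^ m
  set P : Ideal (Rn n ⧸ m2) := K.map (Ideal.Quotient.mkₐ ℂ m2)
  have e1 : Module.finrank ℂ (Rn n ⧸ K) = Module.finrank ℂ ((Rn n ⧸ m2) ⧸ P) :=
    ((DoubleQuot.quotQuotEquivQuotOfLEₐ ℂ hle).symm.toLinearEquiv.finrank_eq)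
  have e2 : Module.finrank ℂ ((Rn n ⧸ m2) ⧸ P) =
      Module.finrank ℂ ((Rn n ⧸ m2) ⧸ (P.restrictScalars ℂ)) :=
    ((Submodule.Quotient.restrictScalarsEquiv ℂ P).symm.finrank_eq)
  have e3 : P.restrictScalars ℂ = (Submodule.restrictScalars ℂ K).map
      (Ideal.Quotient.mkₐ ℂ m2).toLinearMap := by
    ext x
    simp only [Submodule.restrictScalars_mem, Submodule.mem_map]
    have hPP : P = K.map (Ideal.Quotient.mk m2) := rfl
    rw [hPP, Ideal.mem_map_iff_of_surjective _ Ideal.Quotient.mk_surjective]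
    constructor
    · rintro ⟨y, hy, hxy⟩; exact ⟨y, hy, hxy⟩
    · rintro ⟨y, hy, hxy⟩; exact ⟨y, hy, hxy⟩
  have e4 := Submodule.finrank_quotient_add_finrank (P.restrictScalars ℂ)
  rw [e1, e2, ← e3]
  omega

lemma finrank_map_eq_of_disjoint (m : ℕ) (U : Submodule ℂ (Rn n)) [FiniteDimensional ℂ U]
    (hd : U ⊓ Submodule.restrictScalars ℂ (mIdeal n ^ m) = ⊥) :
    Module.finrank ℂ (U.map (Ideal.Quotient.mkₐ ℂ (mIdeal n ^ m)).toLinearMap)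
      = Module.finrank ℂ U := by
  set π := (Ideal.Quotient.mkₐ ℂ (mIdeal n ^ m)).toLinearMap
  have hr := LinearMap.finrank_range_add_finrank_ker (π.comp U.subtype)
  have hrange : LinearMap.range (π.comp U.subtype) = U.map π := by
    rw [LinearMap.range_comp, Submodule.range_subtype]
  have hker : LinearMap.ker (π.comp U.subtype) = ⊥ := by
    rw [LinearMap.ker_comp]
    rw [Submodule.eq_bot_iff]
    intro x hx
    have hx1 : (x : Rn n) ∈ LinearMap.ker π := hx
    have hx2 : (x : Rn n) ∈ Submodule.restrictScalars ℂ (mIdeal n ^ m) := by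
      have h0 : Ideal.Quotient.mk (mIdeal n ^ m) (x : Rn n) = 0 :=
        (LinearMap.mem_ker (f := π)).mp hx1
      exact Ideal.Quotient.eq_zero_iff_mem.mp h0
    have : (x : Rn n) ∈ (⊥ : Submodule ℂ (Rn n)) := hd ▸ Submodule.mem_inf.mpr ⟨x.2, hx2⟩
    exact Subtype.ext (by simpa using this)
  rw [hrange, hker, finrank_bot] at hr
  simpa using hr

end Helpers

/-- Unobstructedness of degree-one tangent vectors at a 2-step ideal: perturbing a basis of
`I_k` by multiples of degree-`(k+1)` forms and adding `I' = (I_{k+1}) + 𝔪^(k+2)` yields an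
ideal `J` with `In(J) = I`, hence `dim_ℂ(R/J) = dim_ℂ(R/I)`. -/
theorem stmt16 (n k h : ℕ) (hk : 1 ≤ k) (I : Ideal (Rn n))
    (hhom : ∀ f ∈ I, ∀ j : ℕ, homogeneousComponent j f ∈ I)
    (h1 : mIdeal n ^ (k + 2) ≤ I) (h2 : I ≤ mIdeal n ^ k)
    (g : Fin h → Rn n) (hg : ∀ i, g i ∈ gradedPiece n I k)
    (hgli : LinearIndependent ℂ g)
    (hgspan : Submodule.span ℂ (Set.range g) = gradedPiece n I k)
    (f : Fin h → Rn n) (hf : ∀ i, f i ∈ homogeneousSubmodule (Fin n) ℂ (k + 1))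
    (t : ℂ)
    (I' : Ideal (Rn n))
    (hI' : I' = Ideal.span ((gradedPiece n I (k + 1) : Set (Rn n))) ⊔ mIdeal n ^ (k + 2))
    (J : Ideal (Rn n))
    (hJ : J = Ideal.span (Set.range fun i => g i + t • f i) ⊔ I') :
    initialIdeal n J = I ∧
    Module.finrank ℂ (Rn n ⧸ J) = Module.finrank ℂ (Rn n ⧸ I) := by
  classical
  set gpk := gradedPiece n I k with hgpk
  set gpk1 := gradedPiece n I (k+1) with hgpk1
  set M2 : Submodule ℂ (Rn n) := Submodule.restrictScalars ℂ (mIdeal n ^ (k+2)) with hM2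
  set v : Fin h → Rn n := fun i => g i + t • f i with hv
  set W : Submodule ℂ (Rn n) := Submodule.span ℂ (Set.range v) with hW
  have hgI : ∀ i, g i ∈ I := fun i => (Submodule.mem_inf.mp (hg i)).1
  have hgk : ∀ i, g i ∈ homogeneousSubmodule (Fin n) ℂ k :=
    fun i => (Submodule.mem_inf.mp (hg i)).2
  -- homogeneous components of elements of W
  have compv : ∀ (a : Fin h → ℂ) (m : ℕ), homogeneousComponent m (∑ i, a i • v i)
      = (if m = k then ∑ i, a i • g i else 0)
        + (if m = k+1 then t • ∑ i, a i • f i else 0) := by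
    intro a m
    rw [map_sum]
    have hterm : ∀ i, homogeneousComponent m (a i • v i)
        = a i • ((if m = k then g i else 0) + t • (if m = k+1 then f i else 0)) := by
      intro i
      rw [map_smul]
      congr 1
      show homogeneousComponent m (g i + t • f i) = _
      rw [map_add, map_smul, homogeneousComponent_of_mem (hgk i),
        homogeneousComponent_of_mem (hf i)]
    rw [Finset.sum_congr rfl fun i _ => hterm i]
    have hkk : ¬ (k = k + 1) := by omega
    by_cases hm1 : m = k
    · subst hm1; simp [hkk]
    · by_cases hm2 : m = k+1
      · subst hm2
        simp only [if_neg hm1, eq_self_iff_true, if_true, zero_add, Finset.smul_sum]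
        exact Finset.sum_congr rfl fun i _ => smul_comm _ _ _
      · simp [hm1, hm2]
  have ha_of : ∀ a : Fin h → ℂ, (∑ i, a i • g i) = 0 → ∀ i, a i = 0 :=
    fun a h0 => Fintype.linearIndependent_iff.mp hgli a h0
  -- basic 𝔪-power memberships
  have hfm : ∀ i, f i ∈ mIdeal n ^ (k+1) := fun i => homSub_mem_mpow (hf i) le_rfl
  have hvm : ∀ i, v i ∈ mIdeal n ^ k := by
    intro i
    apply add_mem (h2 (hgI i))
    rw [smul_eq_C_mul]
    exact Ideal.mul_mem_left _ _ (homSub_mem_mpow (hf i) (by omega))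
  have hWm : W ≤ Submodule.restrictScalars ℂ (mIdeal n ^ k) := by
    rw [hW, Submodule.span_le]
    rintro x ⟨i, rfl⟩
    exact hvm i
  have hgpk1m : ∀ x ∈ gpk1, x ∈ mIdeal n ^ (k+1) := by
    intro x hx
    exact homSub_mem_mpow (Submodule.mem_inf.mp hx).2 le_rfl
  -- I' as a ℂ-subspace
  have hI'sub : Submodule.restrictScalars ℂ I' = gpk1 ⊔ M2 := by
    apply le_antisymm
    · intro x hx
      rw [Submodule.restrictScalars_mem, hI'] at hx
      obtain ⟨a, ha, b, hb, rfl⟩ := Submodule.mem_sup.mp hx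
      refine add_mem ?_ (Submodule.mem_sup_right hb)
      refine Submodule.span_induction ?_ ?_ ?_ ?_ ha
      · intro s hs; exact Submodule.mem_sup_left hs
      · exact zero_mem _
      · intro x y _ _ hx hy; exact add_mem hx hy
      · intro r x _ hx
        obtain ⟨y, hy, z, hz, rfl⟩ := Submodule.mem_sup.mp hx
        rw [smul_eq_mul, mul_add]
        refine add_mem ?_ (Submodule.mem_sup_right (Ideal.mul_mem_left _ _ hz))
        have hdec : r * y = (coeff 0 r) • y + (r - C (coeff 0 r)) * y := by
          rw [smul_eq_C_mul]; ring
        rw [hdec]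
        refine add_mem (Submodule.mem_sup_left (Submodule.smul_mem _ _ hy)) ?_
        refine Submodule.mem_sup_right ?_
        show _ ∈ mIdeal n ^ (k+2)
        rw [show k+2 = 1+(k+1) by omega]
        exact mul_mem_mpow (sub_C_mem r) (hgpk1m y hy)
    · apply sup_le
      · intro x hx
        rw [Submodule.restrictScalars_mem, hI']
        exact Submodule.mem_sup_left (Ideal.subset_span hx)
      · intro x hx
        rw [Submodule.restrictScalars_mem, hI']
        exact Submodule.mem_sup_right hx
  -- J as a ℂ-subspace
  have hJsub : Submodule.restrictScalars ℂ J = W ⊔ (gpk1 ⊔ M2) := by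
    apply le_antisymm
    · intro x hx
      rw [Submodule.restrictScalars_mem, hJ] at hx
      obtain ⟨a, ha, b, hb, rfl⟩ := Submodule.mem_sup.mp hx
      refine add_mem ?_ (Submodule.mem_sup_right (hI'sub ▸ hb))
      refine Submodule.span_induction ?_ ?_ ?_ ?_ ha
      · intro s hs
        exact Submodule.mem_sup_left (Submodule.subset_span hs)
      · exact zero_mem _
      · intro x y _ _ hx hy; exact add_mem hx hy
      · intro r x _ hx
        obtain ⟨w, hw, y, hy, rfl⟩ := Submodule.mem_sup.mp hx
        rw [smul_eq_mul, mul_add]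
        refine add_mem ?_ ?_
        swap
        · -- r * y ∈ gpk1 ⊔ M2 ⊆, since gpk1 ⊔ M2 = I' is an ideal
          refine Submodule.mem_sup_right ?_
          rw [← hI'sub] at hy ⊢
          exact Ideal.mul_mem_left _ _ hy
        · -- r * w  with  w ∈ W
          have hdec : r * w = (coeff 0 r) • w + (homogeneousComponent 1 r) * w
              + (r - C (coeff 0 r) - homogeneousComponent 1 r) * w := by
            rw [smul_eq_C_mul]; ring
          rw [hdec]
          refine add_mem (add_mem (Submodule.mem_sup_left (Submodule.smul_mem _ _ hw)) ?_) ?_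
          · -- (comp₁ r) * w ∈ gpk1 ⊔ M2
            refine Submodule.mem_sup_right ?_
            have key : ∀ u ∈ W, (homogeneousComponent 1 r) * u ∈ gpk1 ⊔ M2 := by
              intro u hu
              refine Submodule.span_induction ?_ ?_ ?_ ?_ hu
              · rintro s ⟨i, rfl⟩
                show (homogeneousComponent 1 r) * (g i + t • f i) ∈ _
                rw [mul_add]
                refine add_mem (Submodule.mem_sup_left ?_) (Submodule.mem_sup_right ?_)
                · refine Submodule.mem_inf.mpr ⟨Ideal.mul_mem_left _ _ (hgI i), ?_⟩
                  rw [mem_homogeneousSubmodule, show k+1 = 1+k by omega]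
                  exact ((homogeneousComponent_isHomogeneous 1 r).mul
                    (mem_homogeneousSubmodule _ _ |>.mp (hgk i)))
                · rw [mul_smul_comm]
                  refine Submodule.smul_mem _ _ ?_
                  show _ ∈ mIdeal n ^ (k+2)
                  have hhmul := ((homogeneousComponent_isHomogeneous 1 r).mul
                    (mem_homogeneousSubmodule _ _ |>.mp (hf i)))
                  refine homSub_mem_mpow (mem_homogeneousSubmodule _ _ |>.mpr hhmul) (by omega)
              · rw [mul_zero]; exact zero_mem _
              · intro x y _ _ hx hy
                rw [mul_add]; exact add_mem hx hy
              · intro c x _ hx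
                rw [mul_smul_comm]
                exact Submodule.smul_mem _ _ hx
            exact key w hw
          · -- (r - C r₀ - comp₁ r) * w ∈ M2
            refine Submodule.mem_sup_right (Submodule.mem_sup_right ?_)
            show _ ∈ mIdeal n ^ (k+2)
            rw [show k+2 = 2+k by omega]
            exact mul_mem_mpow (sub_C_sub_comp1_mem r) (hWm hw)
    · refine sup_le ?_ (sup_le ?_ ?_)
      · rw [hW, Submodule.span_le]
        rintro x ⟨i, rfl⟩
        rw [SetLike.mem_coe, Submodule.restrictScalars_mem, hJ]
        exact Submodule.mem_sup_left (Ideal.subset_span ⟨i, rfl⟩)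
      · intro x hx
        rw [Submodule.restrictScalars_mem, hJ]
        exact Submodule.mem_sup_right ((hI'sub ▸ (Submodule.mem_sup_left hx : x ∈ gpk1 ⊔ M2)) : x ∈ Submodule.restrictScalars ℂ I')
      · intro x hx
        rw [Submodule.restrictScalars_mem, hJ]
        exact Submodule.mem_sup_right ((hI'sub ▸ (Submodule.mem_sup_right hx : x ∈ gpk1 ⊔ M2)) : x ∈ Submodule.restrictScalars ℂ I')
  -- I as a ℂ-subspace
  have hIsub : Submodule.restrictScalars ℂ I = (gpk ⊔ gpk1) ⊔ M2 := by
    apply le_antisymm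
    · intro p hp
      rw [Submodule.restrictScalars_mem] at hp
      have hsum := sum_homogeneousComponent p
      rw [show p = ∑ i ∈ Finset.range (p.totalDegree + 1), homogeneousComponent i p
        from hsum.symm]
      refine Submodule.sum_mem _ ?_
      intro j _
      by_cases hj1 : j < k
      · rw [hc_zero_of_mem (h2 hp) hj1]; exact zero_mem _
      · by_cases hj2 : j = k
        · subst hj2
          exact Submodule.mem_sup_left (Submodule.mem_sup_left
            (Submodule.mem_inf.mpr ⟨hhom p hp _, homogeneousComponent_mem _ _⟩))
        · by_cases hj3 : j = k+1
          · subst hj3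
            exact Submodule.mem_sup_left (Submodule.mem_sup_right
              (Submodule.mem_inf.mpr ⟨hhom p hp _, homogeneousComponent_mem _ _⟩))
          · refine Submodule.mem_sup_right ?_
            show _ ∈ mIdeal n ^ (k+2)
            exact homSub_mem_mpow (homogeneousComponent_mem _ _) (by omega)
    · refine sup_le (sup_le ?_ ?_) ?_
      · exact fun x hx => (Submodule.mem_inf.mp hx).1
      · exact fun x hx => (Submodule.mem_inf.mp hx).1
      · exact fun x hx => h1 hx
  have hJm2 : mIdeal n ^ (k+2) ≤ J := by
    rw [hJ, hI']
    exact le_trans le_sup_right le_sup_right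
  have hgpk1J : ∀ x ∈ gpk1, x ∈ J := by
    intro x hx
    rw [hJ, hI']
    exact Submodule.mem_sup_right (Submodule.mem_sup_left (Ideal.subset_span hx))
  have part1 : initialIdeal n J = I := by
    apply le_antisymm
    · rw [initialIdeal, Ideal.span_le]
      rintro x ⟨p, hpJ, m, rfl, hx0, hlow⟩
      have hp' : p ∈ W ⊔ (gpk1 ⊔ M2) := by rw [← hJsub]; exact hpJ
      obtain ⟨w, hw, y', hy', rfl⟩ := Submodule.mem_sup.mp hp'
      obtain ⟨y, hy, z, hz, rfl⟩ := Submodule.mem_sup.mp hy'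
      obtain ⟨a, rfl⟩ := (Submodule.mem_span_range_iff_exists_fun ℂ).mp (by rw [hW] at hw; exact hw)
      have hyc : ∀ m', homogeneousComponent m' y = if m' = k+1 then y else 0 := fun m' =>
        homogeneousComponent_of_mem (Submodule.mem_inf.mp hy).2
      have hzc : ∀ m' < k+2, homogeneousComponent m' z = 0 := fun m' hm' =>
        hc_zero_of_mem hz hm'
      rw [SetLike.mem_coe, map_add, map_add, compv]
      by_cases hm1 : m = k
      · subst hm1
        rw [if_pos rfl, if_neg (by omega), hyc, if_neg (by omega), hzc _ (by omega)]
        simp only [add_zero]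
        exact Submodule.sum_mem (Submodule.restrictScalars ℂ I)
          fun i _ => Submodule.smul_mem _ _ (hgI i)
      · by_cases hm2 : m = k+1
        · subst hm2
          have h0 := hlow k (by omega)
          rw [map_add, map_add, compv, if_pos rfl, if_neg (by omega), hyc,
            if_neg (by omega), hzc _ (by omega)] at h0
          simp only [add_zero] at h0
          have haz := ha_of a h0
          rw [if_neg hm1, if_pos rfl, hyc, if_pos rfl, hzc _ (by omega)]
          have : t • ∑ i, a i • f i = 0 := by simp [haz]
          rw [this]
          simpa using (Submodule.mem_inf.mp hy).1
        · rw [if_neg hm1, if_neg hm2, hyc, if_neg hm2]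
          by_cases hm3 : m < k+2
          · rw [hzc _ hm3]; simp
          · simp only [zero_add, add_zero]
            exact h1 (homSub_mem_mpow (homogeneousComponent_mem _ _) (by omega))
    · intro p hp
      have hp' : p ∈ (gpk ⊔ gpk1) ⊔ M2 := by
        rw [← hIsub]; exact hp
      obtain ⟨u', hu', z, hz, rfl⟩ := Submodule.mem_sup.mp hp'
      obtain ⟨u, hu, y, hy, rfl⟩ := Submodule.mem_sup.mp hu'
      refine add_mem (add_mem ?_ ?_) ?_
      · have hu2 : u ∈ Submodule.span ℂ (Set.range g) := by rw [hgspan]; exact hu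
        obtain ⟨a, rfl⟩ := (Submodule.mem_span_range_iff_exists_fun ℂ).mp hu2
        by_cases h0 : (∑ i, a i • g i) = 0
        · rw [h0]; exact zero_mem _
        · apply Ideal.subset_span
          refine ⟨∑ i, a i • v i, ?_, k, ?_, h0, ?_⟩
          · have hmem : (∑ i, a i • v i) ∈ Submodule.restrictScalars ℂ J := by
              rw [hJsub]
              exact Submodule.mem_sup_left (Submodule.sum_mem _ fun i _ =>
                Submodule.smul_mem _ _ (Submodule.subset_span ⟨i, rfl⟩))
            exact hmem
          · rw [compv, if_pos rfl, if_neg (by omega), add_zero]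
          · intro m' hm'
            rw [compv, if_neg (by omega), if_neg (by omega), add_zero]
      · exact init_mem (hgpk1J y hy) (Submodule.mem_inf.mp hy).2
      · have hzm : z ∈ mIdeal n ^ (k+2) := hz
        rw [show z = ∑ i ∈ Finset.range (z.totalDegree + 1), homogeneousComponent i z
          from (sum_homogeneousComponent z).symm]
        refine Submodule.sum_mem _ ?_
        intro j _
        by_cases hj : j < k+2
        · rw [hc_zero_of_mem hzm hj]; exact zero_mem _
        · exact init_mem (hJm2 (homSub_mem_mpow (homogeneousComponent_mem _ _) (by omega)))
            (homogeneousComponent_mem _ _)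
  refine ⟨part1, ?_⟩
  haveI := findimV (n := n) (k+2)
  set π := (Ideal.Quotient.mkₐ ℂ (mIdeal n ^ (k+2))).toLinearMap with hπ
  haveI hfin_hom : FiniteDimensional ℂ (homogeneousSubmodule (Fin n) ℂ (k+1)) := by
    apply Submodule.finiteDimensional_of_le (S₂ := restrictTotalDegree (Fin n) ℂ (k+1))
    intro x hx
    rw [mem_restrictTotalDegree]
    exact ((mem_homogeneousSubmodule _ _).mp hx).totalDegree_le
  haveI : FiniteDimensional ℂ gpk1 :=
    Submodule.finiteDimensional_of_le (inf_le_right : gpk1 ≤ homogeneousSubmodule (Fin n) ℂ (k+1))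
  haveI : FiniteDimensional ℂ gpk := by
    rw [← hgspan]
    exact FiniteDimensional.span_of_finite ℂ (Set.finite_range g)
  haveI : FiniteDimensional ℂ W := FiniteDimensional.span_of_finite ℂ (Set.finite_range v)
  -- disjointness
  have dW1 : W ⊓ gpk1 = ⊥ := by
    rw [eq_bot_iff]
    intro x hx
    obtain ⟨hxW, hxg⟩ := Submodule.mem_inf.mp hx
    obtain ⟨a, rfl⟩ := (Submodule.mem_span_range_iff_exists_fun ℂ).mp hxW
    have e2 : homogeneousComponent k (∑ i, a i • v i) = 0 := by
      rw [homogeneousComponent_of_mem (Submodule.mem_inf.mp hxg).2, if_neg (by omega)]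
    have e1 := compv a k
    rw [if_pos rfl, if_neg (by omega), add_zero, e2] at e1
    have haz := ha_of a e1.symm
    simp [haz]
  have dWM : (W ⊔ gpk1) ⊓ M2 = ⊥ := by
    rw [eq_bot_iff]
    intro x hx
    obtain ⟨hx1, hx2⟩ := Submodule.mem_inf.mp hx
    obtain ⟨w, hw, y, hy, rfl⟩ := Submodule.mem_sup.mp hx1
    obtain ⟨a, rfl⟩ := (Submodule.mem_span_range_iff_exists_fun ℂ).mp hw
    have hxm : (∑ i, a i • v i) + y ∈ mIdeal n ^ (k+2) := hx2
    have hck := hc_zero_of_mem hxm (by omega : k < k+2)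
    rw [map_add, compv, if_pos rfl, if_neg (by omega), add_zero,
      homogeneousComponent_of_mem (Submodule.mem_inf.mp hy).2, if_neg (by omega),
      add_zero] at hck
    have haz := ha_of a hck
    have hw0 : (∑ i, a i • v i) = 0 := by simp [haz]
    rw [hw0, zero_add] at hxm ⊢
    have hck1 := hc_zero_of_mem hxm (by omega : k+1 < k+2)
    rw [homogeneousComponent_of_mem (Submodule.mem_inf.mp hy).2, if_pos rfl] at hck1
    simp [hck1]
  have dg1 : gpk ⊓ gpk1 = ⊥ := by
    rw [eq_bot_iff]
    intro x hx
    obtain ⟨hx1, hx2⟩ := Submodule.mem_inf.mp hx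
    have e1 := homogeneousComponent_of_mem (Submodule.mem_inf.mp hx1).2 (m := k)
    have e2 := homogeneousComponent_of_mem (Submodule.mem_inf.mp hx2).2 (m := k)
    rw [if_pos rfl] at e1
    rw [if_neg (by omega)] at e2
    rw [Submodule.mem_bot, ← e1, e2]
  have dgM : (gpk ⊔ gpk1) ⊓ M2 = ⊥ := by
    rw [eq_bot_iff]
    intro x hx
    obtain ⟨hx1, hx2⟩ := Submodule.mem_inf.mp hx
    obtain ⟨u, hu, y, hy, rfl⟩ := Submodule.mem_sup.mp hx1
    have hxm : u + y ∈ mIdeal n ^ (k+2) := hx2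
    have hck := hc_zero_of_mem hxm (by omega : k < k+2)
    rw [map_add, homogeneousComponent_of_mem (Submodule.mem_inf.mp hu).2, if_pos rfl,
      homogeneousComponent_of_mem (Submodule.mem_inf.mp hy).2, if_neg (by omega),
      add_zero] at hck
    rw [hck, zero_add] at hxm ⊢
    have hck1 := hc_zero_of_mem hxm (by omega : k+1 < k+2)
    rw [homogeneousComponent_of_mem (Submodule.mem_inf.mp hy).2, if_pos rfl] at hck1
    simp [hck1]
  -- ranks
  have hvli : LinearIndependent ℂ v := by
    rw [Fintype.linearIndependent_iff]
    intro a h0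
    apply ha_of a
    have e1 := compv a k
    rw [h0, map_zero, if_pos rfl, if_neg (by omega), add_zero] at e1
    exact e1.symm
  have hrW : Module.finrank ℂ W = h := by
    rw [hW, finrank_span_eq_card hvli, Fintype.card_fin]
  have hrg : Module.finrank ℂ gpk = h := by
    rw [← hgspan, finrank_span_eq_card hgli, Fintype.card_fin]
  have hr1 : Module.finrank ℂ ↥(W ⊔ gpk1) = h + Module.finrank ℂ gpk1 := by
    have e := Submodule.finrank_sup_add_finrank_inf_eq W gpk1
    rw [dW1, finrank_bot, hrW] at e
    omega
  have hr2 : Module.finrank ℂ ↥(gpk ⊔ gpk1) = h + Module.finrank ℂ gpk1 := by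
    have e := Submodule.finrank_sup_add_finrank_inf_eq gpk gpk1
    rw [dg1, finrank_bot, hrg] at e
    omega
  -- images mod 𝔪^{k+2}
  have hM2map : M2.map π = ⊥ := by
    rw [eq_bot_iff]
    rintro x ⟨y, hy, rfl⟩
    rw [Submodule.mem_bot]
    show Ideal.Quotient.mkₐ ℂ _ y = 0
    rw [Ideal.Quotient.mkₐ_eq_mk]
    exact Ideal.Quotient.eq_zero_iff_mem.mpr hy
  have hmapJ : (Submodule.restrictScalars ℂ J).map π = (W ⊔ gpk1).map π := by
    rw [hJsub, ← sup_assoc, Submodule.map_sup, hM2map, sup_bot_eq]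
  have hmapI : (Submodule.restrictScalars ℂ I).map π = (gpk ⊔ gpk1).map π := by
    rw [hIsub, Submodule.map_sup, hM2map, sup_bot_eq]
  have e5 : Module.finrank ℂ ((Submodule.restrictScalars ℂ J).map π)
      = Module.finrank ℂ ((Submodule.restrictScalars ℂ I).map π) := by
    rw [hmapJ, hmapI, finrank_map_eq_of_disjoint (k+2) _ dWM,
      finrank_map_eq_of_disjoint (k+2) _ dgM, hr1, hr2]
  rw [finrank_quot (k+2) J hJm2, finrank_quot (k+2) I h1, ← hπ, e5]
end
end

section
/- Let n ≥ 2, k ≥ 1, and let h, h' be nonnegative integers with h ≤ C(k+n−1, n−1), n·h ≤ h' ≤ C(k+n, n−1) (the 'no linear syzygies' regime, s := h' − n·h ≥ 0). Let V ⊆ R_k be an h-dimensional subspace of the degree-k part of R = ℂ[x_1,…,x_n] such that dim_ℂ(R_1·V) = n·h (i.e. V has no linear syzygies). Let W ⊆ R_{k+1} be any subspace of dimension h' containing R_1·V, and set I = (V) + (W) + 𝔪^{k+2}, the ideal generated by V, W and 𝔪^{k+2}. Then I is a homogeneous ideal with 𝔪^{k+2} ⊆ I ⊆ 𝔪^k,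 I_k = V, I_{k+1} = W, and dim_ℂ(R/I) = C(k+n+1, n) − h − h'. -/
open MvPolynomial

noncomputable section

/-- `R_1·V` : the `ℂ`-span of all products of a linear form with an element of `V`. -/
def R1mul (n : ℕ) (V : Submodule ℂ (Rn n)) : Submodule ℂ (Rn n) :=
  Submodule.span ℂ {f | ∃ ℓ ∈ homogeneousSubmodule (Fin n) ℂ 1, ∃ g ∈ V, f = ℓ * g}

set_option synthInstance.maxHeartbeats 1000000
set_option maxHeartbeats 1000000

namespace Stmt17Aux

open Module

/-- Convolution formula for homogeneous components of a product. -/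
theorem hc_mul {n : ℕ} (p q : Rn n) (e : ℕ) :
    homogeneousComponent e (p * q) =
      ∑ ij ∈ Finset.HasAntidiagonal.antidiagonal e,
        homogeneousComponent ij.1 p * homogeneousComponent ij.2 q := by
  ext m
  rw [coeff_homogeneousComponent]
  rw [MvPolynomial.coeff_sum]
  simp only [coeff_mul, coeff_homogeneousComponent]
  rw [Finset.sum_comm]
  have key : ∀ x ∈ Finset.HasAntidiagonal.antidiagonal m,
      (∑ ij ∈ Finset.HasAntidiagonal.antidiagonal e,
        (if x.1.degree = ij.1 then coeff x.1 p else 0) *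
          (if x.2.degree = ij.2 then coeff x.2 q else 0)) =
      (if m.degree = e then coeff x.1 p * coeff x.2 q else 0) := by
    intro x hx
    have hdeg : x.1.degree + x.2.degree = m.degree := by
      have hxm : x.1 + x.2 = m := Finset.HasAntidiagonal.mem_antidiagonal.mp hx
      rw [← hxm, Finsupp.degree_eq_weight_one, map_add]
    by_cases hme : m.degree = e
    · rw [if_pos hme]
      rw [Finset.sum_eq_single_of_mem (x.1.degree, x.2.degree)
        (Finset.HasAntidiagonal.mem_antidiagonal.mpr (by rw [hdeg, hme]))]
      · simp
      · intro b hb hne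
        by_cases h1 : x.1.degree = b.1
        · have h2 : x.2.degree ≠ b.2 := fun h2 => hne (Prod.ext_iff.mpr ⟨h1.symm, h2.symm⟩)
          rw [if_neg h2, mul_zero]
        · rw [if_neg h1, zero_mul]
    · rw [if_neg hme]
      apply Finset.sum_eq_zero
      intro b hb
      by_cases h1 : x.1.degree = b.1
      · by_cases h2 : x.2.degree = b.2
        · exfalso
          apply hme
          rw [← hdeg, h1, h2]
          exact Finset.HasAntidiagonal.mem_antidiagonal.mp hb
        · rw [if_neg h2, mul_zero]
      · rw [if_neg h1, zero_mul]
  rw [Finset.sum_congr rfl key]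
  by_cases hme : m.degree = e <;> simp [hme]

theorem hc_hc {n : ℕ} (d m : ℕ) (p : Rn n) :
    homogeneousComponent d (homogeneousComponent m p)
      = if d = m then homogeneousComponent m p else 0 :=
  homogeneousComponent_of_mem (homogeneousComponent_mem m p)

theorem zero_of_hc {n : ℕ} {p : Rn n}
    (h : ∀ d, homogeneousComponent d p = 0) : p = 0 := by
  rw [← sum_homogeneousComponent p]
  exact Finset.sum_eq_zero fun i _ => h i

/-- The candidate for the ideal `I`, described by homogeneous components. -/
def ESub (n : ℕ) (V W : Submodule ℂ (Rn n)) (k : ℕ) : Submodule ℂ (Rn n) where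
  carrier := {p | homogeneousComponent k p ∈ V ∧ homogeneousComponent (k+1) p ∈ W ∧
      ∀ d < k, homogeneousComponent d p = 0}
  add_mem' := by
    rintro a b ⟨ha1, ha2, ha3⟩ ⟨hb1, hb2, hb3⟩
    refine ⟨?_, ?_, ?_⟩
    · rw [map_add]; exact V.add_mem ha1 hb1
    · rw [map_add]; exact W.add_mem ha2 hb2
    · intro d hd; rw [map_add, ha3 d hd, hb3 d hd, add_zero]
  zero_mem' := by
    refine ⟨?_, ?_, ?_⟩ <;> simp
  smul_mem' := by
    rintro c p ⟨h1, h2, h3⟩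
    refine ⟨?_, ?_, ?_⟩
    · rw [map_smul]; exact V.smul_mem c h1
    · rw [map_smul]; exact W.smul_mem c h2
    · intro d hd; rw [map_smul, h3 d hd, smul_zero]

theorem mem_ESub {n : ℕ} {V W : Submodule ℂ (Rn n)} {k : ℕ} {p : Rn n} :
    p ∈ ESub n V W k ↔ homogeneousComponent k p ∈ V ∧ homogeneousComponent (k+1) p ∈ W ∧
      ∀ d < k, homogeneousComponent d p = 0 := Iff.rfl

theorem mul_mem_ESub {n : ℕ} {V W : Submodule ℂ (Rn n)} {k : ℕ}
    (hVW : R1mul n V ≤ W) (r : Rn n) {p : Rn n} (hp : p ∈ ESub n V W k) :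
    r * p ∈ ESub n V W k := by
  obtain ⟨h1, h2, h3⟩ := hp
  refine ⟨?_, ?_, ?_⟩
  · rw [hc_mul]
    apply Submodule.sum_mem
    rintro ⟨i, j⟩ hij
    have hsum : i + j = k := Finset.HasAntidiagonal.mem_antidiagonal.mp hij
    rcases lt_or_ge j k with hj | hj
    · rw [h3 j hj, mul_zero]; exact V.zero_mem
    · have hj' : j = k := by omega
      have hi : i = 0 := by omega
      subst hj' hi
      rw [homogeneousComponent_zero, C_mul']
      exact V.smul_mem _ h1
  · rw [hc_mul]
    apply Submodule.sum_mem
    rintro ⟨i, j⟩ hij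
    have hsum : i + j = k + 1 := Finset.HasAntidiagonal.mem_antidiagonal.mp hij
    rcases lt_or_ge j k with hj | hj
    · rw [h3 j hj, mul_zero]; exact W.zero_mem
    · have : j = k ∨ j = k + 1 := by omega
      rcases this with hj' | hj'
      · subst hj'
        have hi : i = 1 := by omega
        subst hi
        exact hVW (Submodule.subset_span
          ⟨homogeneousComponent 1 r, homogeneousComponent_mem 1 r,
            homogeneousComponent j p, h1, rfl⟩)
      · subst hj'
        have hi : i = 0 := by omega
        subst hi
        rw [homogeneousComponent_zero, C_mul']
        exact W.smul_mem _ h2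
  · intro d hd
    rw [hc_mul]
    apply Finset.sum_eq_zero
    rintro ⟨i, j⟩ hij
    have hsum : i + j = d := Finset.HasAntidiagonal.mem_antidiagonal.mp hij
    rw [h3 j (by omega), mul_zero]

theorem hc_zero_of_mem_mIdeal {n : ℕ} {b : Rn n} (hb : b ∈ mIdeal n) :
    homogeneousComponent 0 b = 0 := by
  have hker : mIdeal n ≤ RingHom.ker (constantCoeff (R := ℂ) (σ := Fin n)) := by
    rw [mIdeal, Ideal.span_le]
    rintro _ ⟨i, rfl⟩
    simp [RingHom.mem_ker]
  have h0 : coeff 0 b = 0 := by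
    have := hker hb
    rwa [RingHom.mem_ker, constantCoeff_eq] at this
  rw [homogeneousComponent_zero, h0, map_zero]

theorem hc_eq_zero_of_mem_pow {n : ℕ} (m : ℕ) :
    ∀ p ∈ (mIdeal n) ^ m, ∀ d < m, homogeneousComponent d p = 0 := by
  induction m with
  | zero => intro p _ d hd; omega
  | succ m ih =>
    intro p hp
    rw [pow_succ] at hp
    refine Submodule.mul_induction_on hp ?_ ?_
    · intro a ha b hb d hd
      rw [hc_mul]
      apply Finset.sum_eq_zero
      rintro ⟨i, j⟩ hij
      have hsum : i + j = d := Finset.HasAntidiagonal.mem_antidiagonal.mp hij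
      rcases lt_or_ge i m with hi | hi
      · rw [ih a ha i hi, zero_mul]
      · have hj : j = 0 := by omega
        subst hj
        rw [hc_zero_of_mem_mIdeal hb, mul_zero]
    · intro x y hx hy d hd
      rw [map_add, hx d hd, hy d hd, add_zero]

theorem degree_add (n : ℕ) (u v : Fin n →₀ ℕ) :
    Finsupp.degree (u + v) = Finsupp.degree u + Finsupp.degree v := by
  rw [Finsupp.degree_eq_weight_one, map_add]

theorem monomial_mem_pow {n : ℕ} (u : Fin n →₀ ℕ) (c : ℂ) :
    (monomial u c : Rn n) ∈ (mIdeal n) ^ u.degree := by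
  induction u using Finsupp.induction with
  | zero => simp [map_zero]
  | single_add a b f haf hb ih =>
    rw [monomial_single_add, degree_add, pow_add]
    refine Ideal.mul_mem_mul ?_ ih
    have hXa : (X a : Rn n) ∈ mIdeal n := Submodule.subset_span ⟨a, rfl⟩
    have := Ideal.pow_mem_pow hXa b
    have hdeg : (Finsupp.single a b).degree = b := by
      simp [Finsupp.degree_apply, Finsupp.support_single_ne_zero a hb]
    rwa [hdeg]

theorem homog_mem_pow {n : ℕ} (j : ℕ) {p : Rn n}
    (hp : p ∈ homogeneousSubmodule (Fin n) ℂ j) : p ∈ (mIdeal n) ^ j := by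
  rw [← support_sum_monomial_coeff p]
  apply Submodule.sum_mem
  intro u hu
  have hdeg : u.degree = j := by
    have h := (mem_homogeneousSubmodule _ _).mp hp (mem_support_iff.mp hu)
    rw [Finsupp.degree_eq_weight_one]
    exact h
  exact hdeg ▸ monomial_mem_pow u (coeff u p)

/-- Polynomials supported in degrees `< m`. -/
def Dlt (n m : ℕ) : Submodule ℂ (Rn n) :=
  ⨅ (d : ℕ) (_ : m ≤ d), LinearMap.ker (homogeneousComponent (σ := Fin n) (R := ℂ) d)

theorem mem_Dlt {n m : ℕ} {p : Rn n} :
    p ∈ Dlt n m ↔ ∀ d, m ≤ d → homogeneousComponent d p = 0 := by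
  simp [Dlt, Submodule.mem_iInf, LinearMap.mem_ker]

theorem Dlt_zero (n : ℕ) : Dlt n 0 = ⊥ := by
  ext p
  simp only [Submodule.mem_bot, mem_Dlt]
  exact ⟨fun h => zero_of_hc fun d => h d (Nat.zero_le d), by rintro rfl; simp⟩

theorem hs_le_Dlt {n m j : ℕ} (hj : j < m) :
    homogeneousSubmodule (Fin n) ℂ j ≤ Dlt n m := by
  intro p hp
  rw [mem_Dlt]
  intro d hd
  rw [homogeneousComponent_of_mem hp, if_neg (by omega)]

theorem Dlt_succ (n m : ℕ) :
    Dlt n (m + 1) = Dlt n m ⊔ homogeneousSubmodule (Fin n) ℂ m := by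
  apply le_antisymm
  · intro p hp
    rw [mem_Dlt] at hp
    refine Submodule.mem_sup.mpr ⟨p - homogeneousComponent m p, ?_,
      homogeneousComponent m p, homogeneousComponent_mem m p, by ring⟩
    rw [mem_Dlt]
    intro d hd
    rw [map_sub, hc_hc]
    rcases eq_or_lt_of_le hd with hdm | hdm
    · rw [if_pos hdm.symm, ← hdm, sub_self]
    · rw [if_neg (by omega), hp d (by omega), sub_zero]
  · refine sup_le ?_ (hs_le_Dlt (by omega))
    intro p hp
    rw [mem_Dlt] at hp ⊢
    exact fun d hd => hp d (by omega)

theorem Dlt_inf_hs (n m : ℕ) :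
    Dlt n m ⊓ homogeneousSubmodule (Fin n) ℂ m = ⊥ := by
  rw [eq_bot_iff]
  rintro p ⟨h1, h2⟩
  have := homogeneousComponent_of_mem h2 (m := m)
  rw [if_pos rfl] at this
  rw [Submodule.mem_bot, ← this]
  exact mem_Dlt.mp h1 m le_rfl

/-- Index type for the monomial basis of the degree-`j` homogeneous part. -/
def homIdx (n j : ℕ) := {u : Fin n →₀ ℕ // u.degree = j}

def homEquivSym (n j : ℕ) : homIdx n j ≃ Sym (Fin n) j where
  toFun u := ⟨Finsupp.toMultiset u.1, by
    rw [Finsupp.card_toMultiset]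
    simpa [Finsupp.degree_apply, Finsupp.sum] using u.2⟩
  invFun s := ⟨Multiset.toFinsupp s.1, by
    have h := s.2
    have := Multiset.toFinsupp_sum_eq s.1
    simp only [Finsupp.degree_apply, Finsupp.sum] at *
    simpa [this] using h⟩
  left_inv u := Subtype.ext (Finsupp.toMultiset_toFinsupp u.1)
  right_inv s := Subtype.ext (Multiset.toFinsupp_toMultiset s.1)

instance (n j : ℕ) : Fintype (homIdx n j) := Fintype.ofEquiv _ (homEquivSym n j).symm

theorem card_homIdx (n j : ℕ) (hn : 1 ≤ n) :
    Fintype.card (homIdx n j) = (j + n - 1).choose (n - 1) := by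
  rw [Fintype.card_congr (homEquivSym n j), Sym.card_sym_eq_choose]
  rw [Fintype.card_fin]
  have h1 : n + j - 1 = j + n - 1 := by omega
  have h2 : j ≤ j + n - 1 := by omega
  rw [h1, ← Nat.choose_symm h2]
  congr 1
  omega

theorem hs_eq_span (n j : ℕ) :
    homogeneousSubmodule (Fin n) ℂ j =
      Submodule.span ℂ (Set.range fun u : homIdx n j => (monomial u.1 1 : Rn n)) := by
  apply le_antisymm
  · intro p hp
    rw [← support_sum_monomial_coeff p]
    apply Submodule.sum_mem
    intro u hu
    have hdeg : u.degree = j := by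
      have h := (mem_homogeneousSubmodule _ _).mp hp (mem_support_iff.mp hu)
      rw [Finsupp.degree_eq_weight_one]
      exact h
    have : (monomial u (coeff u p) : Rn n) = coeff u p • monomial u 1 := by
      rw [smul_monomial, smul_eq_mul, mul_one]
    exact this ▸ Submodule.smul_mem _ _
      (Submodule.subset_span ⟨(⟨u, hdeg⟩ : homIdx n j), rfl⟩)
  · rw [Submodule.span_le]
    rintro _ ⟨u, rfl⟩
    rw [SetLike.mem_coe, mem_homogeneousSubmodule]
    exact isHomogeneous_monomial 1 u.2

theorem li_monomials (n j : ℕ) :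
    LinearIndependent ℂ (fun u : homIdx n j => (monomial u.1 1 : Rn n)) := by
  have h := (basisMonomials (Fin n) ℂ).linearIndependent.comp
    (fun u : homIdx n j => u.1) Subtype.val_injective
  have hco : ⇑(basisMonomials (Fin n) ℂ) = fun s => (monomial s 1 : Rn n) :=
    coe_basisMonomials (Fin n) ℂ
  rwa [hco] at h

theorem fd_hs (n j : ℕ) : FiniteDimensional ℂ (homogeneousSubmodule (Fin n) ℂ j) := by
  rw [hs_eq_span]
  exact FiniteDimensional.span_of_finite ℂ (Set.finite_range _)

theorem finrank_hs (n j : ℕ) (hn : 1 ≤ n) :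
    finrank ℂ (homogeneousSubmodule (Fin n) ℂ j) = (j + n - 1).choose (n - 1) := by
  rw [hs_eq_span, finrank_span_eq_card (li_monomials n j), card_homIdx n j hn]

theorem fd_Dlt (n m : ℕ) : FiniteDimensional ℂ (Dlt n m) := by
  induction m with
  | zero => rw [Dlt_zero]; infer_instance
  | succ m ih =>
    rw [Dlt_succ]
    haveI := fd_hs n m
    infer_instance

theorem pascal (a b : ℕ) (hb : 1 ≤ b) :
    (a + 1).choose b = a.choose (b - 1) + a.choose b := by
  obtain ⟨b', rfl⟩ : ∃ b', b = b' + 1 := ⟨b - 1, by omega⟩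
  simpa using Nat.choose_succ_succ a b'

theorem finrank_Dlt (n : ℕ) (hn : 1 ≤ n) (m : ℕ) :
    finrank ℂ (Dlt n m) = (m + n - 1).choose n := by
  induction m with
  | zero =>
    rw [Dlt_zero]
    simp [finrank_bot]
    exact (Nat.choose_eq_zero_of_lt (by omega)).symm
  | succ m ih =>
    haveI := fd_Dlt n m
    haveI := fd_hs n m
    have key := Submodule.finrank_sup_add_finrank_inf_eq (Dlt n m)
      (homogeneousSubmodule (Fin n) ℂ m)
    rw [Dlt_inf_hs, finrank_bot, ← Dlt_succ, add_zero, ih, finrank_hs n m hn] at key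
    have h1 : m + 1 + n - 1 = (m + n - 1) + 1 := by omega
    rw [key, h1, pascal _ _ (by omega)]
    omega

/-- Complement of a subspace inside a finite-dimensional subspace. -/
theorem exists_compl_within {n : ℕ} (P : Submodule ℂ (Rn n)) [FiniteDimensional ℂ P]
    (V : Submodule ℂ (Rn n)) (hVP : V ≤ P) :
    ∃ V' : Submodule ℂ (Rn n), V' ≤ P ∧ V ⊔ V' = P ∧ V ⊓ V' = ⊥ ∧
      finrank ℂ V + finrank ℂ V' = finrank ℂ P := by
  obtain ⟨Vc, hc⟩ := Submodule.exists_isCompl (V.comap P.subtype)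
  have hmap : (V.comap P.subtype).map P.subtype = V := by
    rw [Submodule.map_comap_subtype]
    exact inf_eq_right.mpr hVP
  refine ⟨Vc.map P.subtype, Submodule.map_subtype_le P Vc, ?_, ?_, ?_⟩
  · rw [← hmap, ← Submodule.map_sup, hc.codisjoint.eq_top, Submodule.map_top,
      Submodule.range_subtype]
  · rw [← hmap, ← Submodule.map_inf _ (Submodule.injective_subtype P),
      hc.disjoint.eq_bot, Submodule.map_bot]
  · have e1 : finrank ℂ (V.comap P.subtype) = finrank ℂ V :=
      (Submodule.comapSubtypeEquivOfLe hVP).finrank_eq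
    have e2 := Submodule.finrank_add_eq_of_isCompl hc
    have e3 : finrank ℂ (Vc.map P.subtype) = finrank ℂ Vc :=
      Submodule.finrank_map_subtype_eq P Vc
    omega

end Stmt17Aux

open Stmt17Aux Module

/-- Parametrization of 2-step ideals without linear syzygies: given `V ⊆ R_k` of dimension
`h` with `dim (R_1·V) = n·h` and `W ⊆ R_{k+1}` of dimension `h'` containing `R_1·V`, the
ideal `I = (V) + (W) + 𝔪^(k+2)` satisfies `𝔪^(k+2) ⊆ I ⊆ 𝔪^k`, `I_k = V`, `I_{k+1} = W`
and `dim_ℂ(R/I) = C(k+n+1, n) − h − h'`. -/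
theorem stmt17 (n k h h' : ℕ) (hn : 2 ≤ n) (hk : 1 ≤ k)
    (hh : h ≤ Nat.choose (k + n - 1) (n - 1))
    (hlow : n * h ≤ h') (hup : h' ≤ Nat.choose (k + n) (n - 1))
    (V : Submodule ℂ (Rn n)) (hV : V ≤ homogeneousSubmodule (Fin n) ℂ k)
    (hVdim : Module.finrank ℂ ↥V = h)
    (hVnosyz : Module.finrank ℂ ↥(R1mul n V) = n * h)
    (W : Submodule ℂ (Rn n)) (hW : W ≤ homogeneousSubmodule (Fin n) ℂ (k + 1))
    (hVW : R1mul n V ≤ W) (hWdim : Module.finrank ℂ ↥W = h')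
    (I : Ideal (Rn n))
    (hI : I = Ideal.span (V : Set (Rn n)) ⊔ Ideal.span (W : Set (Rn n)) ⊔ mIdeal n ^ (k + 2)) :
    mIdeal n ^ (k + 2) ≤ I ∧ I ≤ mIdeal n ^ k ∧
    gradedPiece n I k = V ∧ gradedPiece n I (k + 1) = W ∧
    (Module.finrank ℂ (Rn n ⧸ I) : ℤ) = (Nat.choose (k + n + 1) n : ℤ) - h - h' := by
  classical
  have hVE : ∀ v ∈ V, v ∈ ESub n V W k := by
    intro v hv
    have hvH := hV hv
    refine ⟨?_, ?_, ?_⟩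
    · rw [homogeneousComponent_of_mem hvH, if_pos rfl]; exact hv
    · rw [homogeneousComponent_of_mem hvH, if_neg (by omega)]; exact W.zero_mem
    · intro d hd; rw [homogeneousComponent_of_mem hvH, if_neg (by omega)]
  have hWE : ∀ w ∈ W, w ∈ ESub n V W k := by
    intro w hw
    have hwH := hW hw
    refine ⟨?_, ?_, ?_⟩
    · rw [homogeneousComponent_of_mem hwH, if_neg (by omega)]; exact V.zero_mem
    · rw [homogeneousComponent_of_mem hwH, if_pos rfl]; exact hw
    · intro d hd; rw [homogeneousComponent_of_mem hwH, if_neg (by omega)]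
  have hIE : ∀ p ∈ I, p ∈ ESub n V W k := by
    intro p hp
    rw [hI] at hp
    rcases Submodule.mem_sup.mp hp with ⟨x, hx, c, hc, rfl⟩
    rcases Submodule.mem_sup.mp hx with ⟨a, ha, b, hb, rfl⟩
    have hc' : c ∈ ESub n V W k := by
      have h0 := hc_eq_zero_of_mem_pow (k+2) c hc
      exact ⟨by rw [h0 k (by omega)]; exact V.zero_mem,
        by rw [h0 (k+1) (by omega)]; exact W.zero_mem,
        fun d hd => h0 d (by omega)⟩
    have ha' : a ∈ ESub n V W k := by
      refine Submodule.span_induction (p := fun x _ => x ∈ ESub n V W k) ?_ ?_ ?_ ?_ ha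
      · exact fun v hv => hVE v hv
      · exact (ESub n V W k).zero_mem
      · exact fun x y _ _ hx hy => (ESub n V W k).add_mem hx hy
      · intro r x _ hx
        rw [smul_eq_mul]
        exact mul_mem_ESub hVW r hx
    have hb' : b ∈ ESub n V W k := by
      refine Submodule.span_induction (p := fun x _ => x ∈ ESub n V W k) ?_ ?_ ?_ ?_ hb
      · exact fun w hw => hWE w hw
      · exact (ESub n V W k).zero_mem
      · exact fun x y _ _ hx hy => (ESub n V W k).add_mem hx hy
      · intro r x _ hx
        rw [smul_eq_mul]
        exact mul_mem_ESub hVW r hx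
    exact (ESub n V W k).add_mem ((ESub n V W k).add_mem ha' hb') hc'
  have hEI : ∀ p ∈ ESub n V W k, p ∈ I := by
    intro p hp
    rw [hI, ← sum_homogeneousComponent p]
    apply Submodule.sum_mem
    intro i _
    by_cases hik : i < k
    · rw [hp.2.2 i hik]; exact Submodule.zero_mem _
    by_cases hik2 : i = k
    · subst hik2
      exact Submodule.mem_sup_left (Submodule.mem_sup_left (Ideal.subset_span hp.1))
    by_cases hik3 : i = k + 1
    · subst hik3
      exact Submodule.mem_sup_left (Submodule.mem_sup_right (Ideal.subset_span hp.2.1))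
    · refine Submodule.mem_sup_right ?_
      exact Ideal.pow_le_pow_right (by omega)
        (homog_mem_pow i (homogeneousComponent_mem i p))
  have hsub : (Submodule.restrictScalars ℂ I : Submodule ℂ (Rn n)) = ESub n V W k := by
    ext p
    exact ⟨hIE p, hEI p⟩
  refine ⟨?_, ?_, ?_, ?_, ?_⟩
  · rw [hI]; exact le_sup_right
  · rw [hI]
    refine sup_le (sup_le ?_ ?_) (Ideal.pow_le_pow_right (by omega))
    · rw [Ideal.span_le]
      intro v hv
      exact homog_mem_pow k (hV hv)
    · rw [Ideal.span_le]
      intro w hw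
      exact Ideal.pow_le_pow_right (by omega) (homog_mem_pow (k+1) (hW hw))
  · ext x
    simp only [gradedPiece, Submodule.mem_inf, Submodule.restrictScalars_mem]
    constructor
    · rintro ⟨hxI, hxH⟩
      have := (hIE x hxI).1
      rwa [homogeneousComponent_of_mem hxH, if_pos rfl] at this
    · intro hx
      exact ⟨hEI x (hVE x hx), hV hx⟩
  · ext x
    simp only [gradedPiece, Submodule.mem_inf, Submodule.restrictScalars_mem]
    constructor
    · rintro ⟨hxI, hxH⟩
      have := (hIE x hxI).2.1
      rwa [homogeneousComponent_of_mem hxH, if_pos rfl] at this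
    · intro hx
      exact ⟨hEI x (hWE x hx), hW hx⟩
  · haveI := fd_hs n k
    haveI := fd_hs n (k+1)
    haveI := fd_Dlt n k
    obtain ⟨V', hV'le, hVsup, hVinf, hVrank⟩ :=
      exists_compl_within (homogeneousSubmodule (Fin n) ℂ k) V hV
    obtain ⟨W', hW'le, hWsup, hWinf, hWrank⟩ :=
      exists_compl_within (homogeneousSubmodule (Fin n) ℂ (k+1)) W hW
    haveI fdV' : FiniteDimensional ℂ V' := Submodule.finiteDimensional_of_le hV'le
    haveI fdW' : FiniteDimensional ℂ W' := Submodule.finiteDimensional_of_le hW'le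
    have hcompl : IsCompl (ESub n V W k) (Dlt n k ⊔ V' ⊔ W') := by
      constructor
      · refine Submodule.disjoint_def.mpr fun p hpE hpK => ?_
        rcases Submodule.mem_sup.mp hpK with ⟨y, hy, ww, hww, rfl⟩
        rcases Submodule.mem_sup.mp hy with ⟨dd, hdd, vv, hvv, rfl⟩
        obtain ⟨h1, h2, h3⟩ := hpE
        have hdd0 : dd = 0 := by
          apply zero_of_hc
          intro e
          rcases lt_or_ge e k with he | he
          · have hcomp := h3 e he
            rwa [map_add, map_add, homogeneousComponent_of_mem (hV'le hvv),
              if_neg (by omega), homogeneousComponent_of_mem (hW'le hww),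
              if_neg (by omega), add_zero, add_zero] at hcomp
          · exact mem_Dlt.mp hdd e he
        have hvv0 : vv = 0 := by
          have hHk : homogeneousComponent k (dd + vv + ww) = vv := by
            rw [map_add, map_add, mem_Dlt.mp hdd k le_rfl,
              homogeneousComponent_of_mem (hV'le hvv), if_pos rfl,
              homogeneousComponent_of_mem (hW'le hww), if_neg (by omega),
              zero_add, add_zero]
          have hmem : vv ∈ V ⊓ V' := ⟨hHk ▸ h1, hvv⟩
          rw [hVinf] at hmem
          simpa using hmem
        have hww0 : ww = 0 := by
          have hHk1 : homogeneousComponent (k+1) (dd + vv + ww) = ww := by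
            rw [map_add, map_add, mem_Dlt.mp hdd (k+1) (by omega),
              homogeneousComponent_of_mem (hV'le hvv), if_neg (by omega),
              homogeneousComponent_of_mem (hW'le hww), if_pos rfl,
              zero_add, zero_add]
          have hmem : ww ∈ W ⊓ W' := ⟨hHk1 ▸ h2, hww⟩
          rw [hWinf] at hmem
          simpa using hmem
        rw [hdd0, hvv0, hww0]
        simp
      · rw [codisjoint_iff, eq_top_iff]
        intro p _
        set q : Rn n := ∑ d ∈ Finset.range k, homogeneousComponent d p with hqdef
        have hq : q ∈ Dlt n k := by
          rw [mem_Dlt]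
          intro e he
          rw [hqdef, map_sum]
          apply Finset.sum_eq_zero
          intro d hd
          rw [hc_hc, if_neg (by have := Finset.mem_range.mp hd; omega)]
        have hcq : ∀ e < k, homogeneousComponent e q = homogeneousComponent e p := by
          intro e he
          rw [hqdef, map_sum, Finset.sum_congr rfl (fun d _ => hc_hc e d p),
            Finset.sum_ite_eq, if_pos (Finset.mem_range.mpr he)]
        have hk1 : homogeneousComponent k p ∈ V ⊔ V' := by
          rw [hVsup]; exact homogeneousComponent_mem k p
        obtain ⟨v, hv, v', hv', hvsum⟩ := Submodule.mem_sup.mp hk1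
        have hk2 : homogeneousComponent (k+1) p ∈ W ⊔ W' := by
          rw [hWsup]; exact homogeneousComponent_mem (k+1) p
        obtain ⟨w, hw, w', hw', hwsum⟩ := Submodule.mem_sup.mp hk2
        have htail : p - q - homogeneousComponent k p - homogeneousComponent (k+1) p
            ∈ ESub n V W k := by
          refine ⟨?_, ?_, ?_⟩
          · rw [map_sub, map_sub, map_sub, hc_hc k k p, if_pos rfl,
              hc_hc k (k+1) p, if_neg (by omega), mem_Dlt.mp hq k le_rfl]
            simpa using V.zero_mem
          · rw [map_sub, map_sub, map_sub, hc_hc (k+1) k p, if_neg (by omega),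
              hc_hc (k+1) (k+1) p, if_pos rfl, mem_Dlt.mp hq (k+1) (by omega)]
            simpa using W.zero_mem
          · intro d hd
            rw [map_sub, map_sub, map_sub, hc_hc d k p, if_neg (by omega),
              hc_hc d (k+1) p, if_neg (by omega), hcq d hd]
            simp
        refine Submodule.mem_sup.mpr
          ⟨(p - q - homogeneousComponent k p - homogeneousComponent (k+1) p) + v + w,
            (ESub n V W k).add_mem ((ESub n V W k).add_mem htail (hVE v hv)) (hWE w hw),
            q + v' + w', ?_, ?_⟩
        · exact Submodule.add_mem _
            (Submodule.add_mem _ (Submodule.mem_sup_left (Submodule.mem_sup_left hq))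
              (Submodule.mem_sup_left (Submodule.mem_sup_right hv')))
            (Submodule.mem_sup_right hw')
        · rw [← hvsum, ← hwsum]; ring
    have efin : finrank ℂ (Rn n ⧸ I) = finrank ℂ (Dlt n k ⊔ V' ⊔ W' : Submodule ℂ (Rn n)) := by
      have e0 : finrank ℂ (Rn n ⧸ Submodule.restrictScalars ℂ I) = finrank ℂ (Rn n ⧸ I) :=
        (Submodule.Quotient.restrictScalarsEquiv ℂ I).finrank_eq
      rw [← e0, hsub]
      exact (Submodule.quotientEquivOfIsCompl _ _ hcompl).finrank_eq
    have hd1 : Dlt n k ⊓ V' = ⊥ := by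
      rw [eq_bot_iff]
      rintro p ⟨h1, h2⟩
      have hcomp := homogeneousComponent_of_mem (hV'le h2) (m := k)
      rw [if_pos rfl] at hcomp
      rw [Submodule.mem_bot, ← hcomp]
      exact mem_Dlt.mp h1 k le_rfl
    have hd2 : (Dlt n k ⊔ V') ⊓ W' = ⊥ := by
      rw [eq_bot_iff]
      rintro p ⟨h1, h2⟩
      have hcomp := homogeneousComponent_of_mem (hW'le h2) (m := k+1)
      rw [if_pos rfl] at hcomp
      rw [Submodule.mem_bot, ← hcomp]
      rcases Submodule.mem_sup.mp h1 with ⟨dd, hdd, vv, hvv, rfl⟩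
      rw [map_add, mem_Dlt.mp hdd (k+1) (by omega),
        homogeneousComponent_of_mem (hV'le hvv), if_neg (by omega), add_zero]
    have f1 := Submodule.finrank_sup_add_finrank_inf_eq (Dlt n k) V'
    have f2 := Submodule.finrank_sup_add_finrank_inf_eq (Dlt n k ⊔ V') W'
    rw [hd1, finrank_bot, add_zero] at f1
    rw [hd2, finrank_bot, add_zero] at f2
    have hDk := finrank_Dlt n (by omega) k
    have hHk := finrank_hs n k (by omega)
    have hHk1 := finrank_hs n (k+1) (by omega)
    rw [hVdim, hHk] at hVrank
    rw [hWdim, hHk1] at hWrank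
    have hx : k + 1 + n - 1 = k + n := by omega
    rw [hx] at hWrank
    have p1 : (k + n + 1).choose n = (k + n).choose (n-1) + (k + n).choose n :=
      pascal _ _ (by omega)
    have p2 : (k + n).choose n = (k + n - 1).choose (n-1) + (k + n - 1).choose n := by
      have hy : k + n = (k + n - 1) + 1 := by omega
      rw [hy, pascal _ _ (by omega)]
      simp
    rw [efin, f2, f1, hDk]
    omega
end
end
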